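/- In the block construction, writing N_j for the number of sets in F containing exactly j blocks, we have, for all j ∈ [m−1], N_{j+1}/N_j = ((m − j)/(j + 1)) · 2^{−s} ≤ m · 2^{−s}. -/
import Mathlib


open Finset

/-- A family of finite sets is union-closed if it contains the union of any two of
its members. -/
def UnionClosed {α : Type*} [DecidableEq α] (F : Finset (Finset α)) : Prop :=
  ∀ A ∈ F, ∀ B ∈ F, A ∪ B ∈ F

/-- The abundance of `x` with respect to a family `F`. -/
noncomputable def abundance {α : Type*} [DecidableEq α] (F : Finset (Finset α)) (x : α) : ℝ :=
  ((F.filter (fun A => x ∈ A)).card : ℝ) / (F.card : ℝ)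

/-- The average overlap density of `F`. -/
noncomputable def AOD {α : Type*} [DecidableEq α] (F : Finset (Finset α)) : ℝ :=
  (1 / (((F.erase ∅).card : ℝ))) *
    ∑ A ∈ F.erase ∅, (1 / (A.card : ℝ)) * ∑ x ∈ A, abundance F x

/-- The union-closed family generated by `G = {B i ∪ {j} : i, j ∈ T}`:
all unions of nonempty subcollections of `G`. -/
def blockFamily {n m : ℕ} (B : Fin m → Finset (Fin n)) (T : Finset (Fin n)) :
    Finset (Finset (Fin n)) :=
  ((((univ : Finset (Fin m)) ×ˢ T).image (fun p => B p.1 ∪ {p.2})).powerset.filter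
      (fun C => C.Nonempty)).image (fun C => C.sup id)

lemma mem_blockFamily_iff {n m : ℕ} (B : Fin m → Finset (Fin n)) (T' : Finset (Fin n))
    (A : Finset (Fin n)) :
    A ∈ blockFamily B T' ↔ ∃ P : Finset (Fin m × Fin n),
      P ⊆ univ ×ˢ T' ∧ P.Nonempty ∧ A = P.sup (fun p => B p.1 ∪ {p.2}) := by
  unfold blockFamily
  simp only [mem_image, mem_filter, mem_powerset]
  constructor
  · rintro ⟨C, ⟨hC, hCne⟩, rfl⟩
    obtain ⟨P, hP, rfl⟩ := Finset.subset_image_iff.mp hC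
    refine ⟨P, hP, Finset.Nonempty.of_image hCne, ?_⟩
    rw [Finset.sup_image]; rfl
  · rintro ⟨P, hP, hPne, rfl⟩
    refine ⟨P.image (fun p => B p.1 ∪ {p.2}), ⟨image_subset_image hP, hPne.image _⟩, ?_⟩
    rw [Finset.sup_image]; rfl

lemma mem_blockFamily_iff' {n m : ℕ} (B T : Fin m → Finset (Fin n))
    (hT : ∀ i, T i ⊆ B i) (hTne : ∀ i, (T i).Nonempty) (A : Finset (Fin n)) :
    A ∈ blockFamily B ((univ : Finset (Fin m)).biUnion T) ↔
      ∃ S : Finset (Fin m), ∃ U : Finset (Fin n), S.Nonempty ∧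
        U ⊆ (univ : Finset (Fin m)).biUnion T \ S.biUnion B ∧ A = S.biUnion B ∪ U := by
  rw [mem_blockFamily_iff]
  constructor
  · rintro ⟨P, hP, hPne, rfl⟩
    refine ⟨P.image Prod.fst, (P.image Prod.snd) \ (P.image Prod.fst).biUnion B,
      hPne.image _, sdiff_subset_sdiff ?_ le_rfl, ?_⟩
    · intro x hx
      obtain ⟨p, hp, rfl⟩ := mem_image.mp hx
      exact (mem_product.mp (hP hp)).2
    · rw [Finset.union_sdiff_self_eq_union]
      ext x
      simp only [Finset.mem_sup, mem_union, mem_biUnion, mem_image, mem_singleton]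
      constructor
      · rintro ⟨p, hp, hx | hx⟩
        · exact Or.inl ⟨p.1, ⟨p, hp, rfl⟩, hx⟩
        · exact Or.inr ⟨p, hp, hx.symm⟩
      · rintro (⟨i, ⟨p, hp, rfl⟩, hx⟩ | ⟨p, hp, rfl⟩)
        · exact ⟨p, hp, Or.inl hx⟩
        · exact ⟨p, hp, Or.inr rfl⟩
  · rintro ⟨S, U, hSne, hU, rfl⟩
    obtain ⟨i0, hi0⟩ := hSne
    refine ⟨S.biUnion (fun i => (T i).image (fun t => ((i, t) : Fin m × Fin n)))
        ∪ U.image (fun u => (i0, u)), ?_, ?_, ?_⟩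
    · intro p hp
      rcases mem_union.mp hp with h | h
      · obtain ⟨i, hi, h⟩ := mem_biUnion.mp h
        obtain ⟨t, ht, rfl⟩ := mem_image.mp h
        exact mem_product.mpr ⟨mem_univ _, mem_biUnion.mpr ⟨i, mem_univ _, ht⟩⟩
      · obtain ⟨u, hu, rfl⟩ := mem_image.mp h
        exact mem_product.mpr ⟨mem_univ _, (mem_sdiff.mp (hU hu)).1⟩
    · obtain ⟨t, ht⟩ := hTne i0
      exact ⟨(i0, t), mem_union.mpr (Or.inl (mem_biUnion.mpr ⟨i0, hi0,
        mem_image.mpr ⟨t, ht, rfl⟩⟩))⟩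
    · ext x
      simp only [Finset.mem_sup, mem_union, mem_biUnion, mem_image, mem_singleton]
      constructor
      · rintro (⟨i, hi, hx⟩ | hx)
        · obtain ⟨t, ht⟩ := hTne i
          exact ⟨(i, t), Or.inl ⟨i, hi, t, ht, rfl⟩, Or.inl hx⟩
        · exact ⟨(i0, x), Or.inr ⟨x, hx, rfl⟩, Or.inr rfl⟩
      · rintro ⟨p, hp | hp, hx | hx⟩
        · obtain ⟨i, hi, t, ht, rfl⟩ := hp
          exact Or.inl ⟨i, hi, hx⟩
        · obtain ⟨i, hi, t, ht, h⟩ := hp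
          subst hx
          cases h
          exact Or.inl ⟨i, hi, hT i ht⟩
        · obtain ⟨u, hu, rfl⟩ := hp
          exact Or.inl ⟨i0, hi0, hx⟩
        · obtain ⟨u, hu, h⟩ := hp
          subst hx
          cases h
          exact Or.inr hu

lemma block_eq {n m : ℕ} (B : Fin m → Finset (Fin n))
    (hBdisj : ∀ i j : Fin m, i ≠ j → Disjoint (B i) (B j))
    {x : Fin n} {a b : Fin m} (h1 : x ∈ B a) (h2 : x ∈ B b) : a = b := by
  by_contra h
  exact disjoint_left.mp (hBdisj a b h) h1 h2

lemma filter_blocks_eq {n m : ℕ} (B T : Fin m → Finset (Fin n))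
    (hBdisj : ∀ i j : Fin m, i ≠ j → Disjoint (B i) (B j))
    (hT : ∀ i, T i ⊆ B i) (hlt : ∀ i, (T i).card < (B i).card)
    (S : Finset (Fin m)) (U : Finset (Fin n))
    (hU : U ⊆ (univ : Finset (Fin m)).biUnion T \ S.biUnion B) :
    univ.filter (fun i => B i ⊆ S.biUnion B ∪ U) = S := by
  ext i
  simp only [mem_filter, mem_univ, true_and]
  constructor
  · intro hBi
    by_contra hiS
    have hsub : B i ⊆ T i := by
      intro x hx
      have hx' := hBi hx
      have hxX : x ∉ S.biUnion B := by
        intro hmem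
        obtain ⟨l, hl, hxl⟩ := mem_biUnion.mp hmem
        exact hiS (block_eq B hBdisj hxl hx ▸ hl)
      have hxU : x ∈ U := (mem_union.mp hx').resolve_left hxX
      have hxT : x ∈ (univ : Finset (Fin m)).biUnion T := (mem_sdiff.mp (hU hxU)).1
      obtain ⟨l, _, hxl⟩ := mem_biUnion.mp hxT
      exact block_eq B hBdisj (hT l hxl) hx ▸ hxl
    exact absurd (card_le_card hsub) (not_le.mpr (hlt i))
  · intro hi
    exact fun x hx => mem_union.mpr (Or.inl (mem_biUnion.mpr ⟨i, hi, hx⟩))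

lemma compl_biUnion_T {n m : ℕ} (B T : Fin m → Finset (Fin n))
    (hBdisj : ∀ i j : Fin m, i ≠ j → Disjoint (B i) (B j))
    (hT : ∀ i, T i ⊆ B i) (S : Finset (Fin m)) :
    (univ : Finset (Fin m)).biUnion T \ S.biUnion B = Sᶜ.biUnion T := by
  ext x
  constructor
  · intro hx
    obtain ⟨hx1, hx2⟩ := mem_sdiff.mp hx
    obtain ⟨l, _, hxl⟩ := mem_biUnion.mp hx1
    refine mem_biUnion.mpr ⟨l, mem_compl.mpr ?_, hxl⟩
    intro hlS
    exact hx2 (mem_biUnion.mpr ⟨l, hlS, hT l hxl⟩)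
  · intro hx
    obtain ⟨l, hl, hxl⟩ := mem_biUnion.mp hx
    refine mem_sdiff.mpr ⟨mem_biUnion.mpr ⟨l, mem_univ _, hxl⟩, ?_⟩
    intro hmem
    obtain ⟨i, hiS, hxi⟩ := mem_biUnion.mp hmem
    exact (mem_compl.mp hl) (block_eq B hBdisj (hT l hxl) hxi ▸ hiS)

lemma blockFamily_count {n m s : ℕ} (B T : Fin m → Finset (Fin n))
    (hBdisj : ∀ i j : Fin m, i ≠ j → Disjoint (B i) (B j))
    (hT : ∀ i, T i ⊆ B i) (hTcard : ∀ i, (T i).card = s) (hs : 0 < s)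
    (hlt : ∀ i, (T i).card < (B i).card)
    (j : ℕ) (hj : 1 ≤ j) :
    ((blockFamily B ((univ : Finset (Fin m)).biUnion T)).filter
      (fun A => (univ.filter (fun i : Fin m => B i ⊆ A)).card = j)).card
      = Nat.choose m j * 2 ^ (s * (m - j)) := by
  have hTne : ∀ i, (T i).Nonempty := fun i =>
    card_pos.mp (by rw [hTcard i]; exact hs)
  set D := (powersetCard j (univ : Finset (Fin m))).sigma
      (fun S => ((univ : Finset (Fin m)).biUnion T \ S.biUnion B).powerset) with hD
  have himg : (blockFamily B ((univ : Finset (Fin m)).biUnion T)).filter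
      (fun A => (univ.filter (fun i : Fin m => B i ⊆ A)).card = j)
      = D.image (fun p => p.1.biUnion B ∪ p.2) := by
    ext A
    simp only [mem_filter, mem_image]
    constructor
    · rintro ⟨hA, hcard⟩
      obtain ⟨S, U, hSne, hU, rfl⟩ := (mem_blockFamily_iff' B T hT hTne A).mp hA
      have hfil := filter_blocks_eq B T hBdisj hT hlt S U hU
      refine ⟨⟨S, U⟩, mem_sigma.mpr ⟨?_, mem_powerset.mpr hU⟩, rfl⟩
      rw [mem_powersetCard_univ, ← hfil]
      exact hcard
    · rintro ⟨⟨S, U⟩, hp, rfl⟩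
      obtain ⟨hS, hU⟩ := mem_sigma.mp hp
      rw [mem_powersetCard_univ] at hS
      rw [mem_powerset] at hU
      have hSne : S.Nonempty := card_pos.mp (hS ▸ hj)
      refine ⟨(mem_blockFamily_iff' B T hT hTne _).mpr ⟨S, U, hSne, hU, rfl⟩, ?_⟩
      rw [filter_blocks_eq B T hBdisj hT hlt S U hU]
      exact hS
  rw [himg, card_image_of_injOn, card_sigma]
  · have hcardS : ∀ S ∈ powersetCard j (univ : Finset (Fin m)),
        ((univ : Finset (Fin m)).biUnion T \ S.biUnion B).powerset.card
          = 2 ^ (s * (m - j)) := by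
      intro S hS
      rw [mem_powersetCard_univ] at hS
      rw [card_powerset, compl_biUnion_T B T hBdisj hT S]
      congr 1
      rw [card_biUnion]
      · rw [Finset.sum_congr rfl (fun i _ => hTcard i), Finset.sum_const, smul_eq_mul,
          card_compl, Fintype.card_fin, hS, Nat.mul_comm]
      · intro a _ b _ hab
        exact Finset.disjoint_of_subset_left (hT a)
          (Finset.disjoint_of_subset_right (hT b) (hBdisj a b hab))
    rw [Finset.sum_congr rfl hcardS, Finset.sum_const, smul_eq_mul,
      card_powersetCard, card_univ, Fintype.card_fin]
  · rintro ⟨S, U⟩ hp ⟨S', U'⟩ hq heq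
    obtain ⟨hS, hU⟩ := mem_sigma.mp hp
    obtain ⟨hS', hU'⟩ := mem_sigma.mp hq
    rw [mem_powerset] at hU hU'
    simp only at heq
    have hSS : S = S' := by
      rw [← filter_blocks_eq B T hBdisj hT hlt S U hU,
        ← filter_blocks_eq B T hBdisj hT hlt S' U' hU', heq]
    subst hSS
    have hdisj : Disjoint (S.biUnion B) U :=
      Finset.disjoint_of_subset_right hU disjoint_sdiff
    have hdisj' : Disjoint (S.biUnion B) U' :=
      Finset.disjoint_of_subset_right hU' disjoint_sdiff
    have : U = U' := by
      rw [← Finset.union_sdiff_cancel_left hdisj, ← Finset.union_sdiff_cancel_left hdisj', heq]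
    rw [this]

/-- In the block construction, with `N_j` the number of sets in `F`
containing exactly `j` blocks, for all `j ∈ [m−1]` we have
`N_{j+1}/N_j = ((m−j)/(j+1)) · 2^{−s} ≤ m · 2^{−s}`. -/
theorem blockFamily_count_ratio
    (k m s : ℕ) (hk : 0 < k) (hm : 2 ≤ m) (hs : 0 < s) (hsk : s + 2 ≤ k)
    (B : Fin m → Finset (Fin (k * m)))
    (hBcard : ∀ i, (B i).card = k)
    (hBdisj : ∀ i j : Fin m, i ≠ j → Disjoint (B i) (B j))
    (hBcover : (Finset.univ : Finset (Fin m)).biUnion B = (Finset.univ : Finset (Fin (k * m))))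
    (T : Fin m → Finset (Fin (k * m)))
    (hT : ∀ i, T i ⊆ B i) (hTcard : ∀ i, (T i).card = s)
    (N : ℕ → ℕ)
    (hN : ∀ j : ℕ, N j = ((blockFamily B ((univ : Finset (Fin m)).biUnion T)).filter
      (fun A => (univ.filter (fun i : Fin m => B i ⊆ A)).card = j)).card) :
    ∀ j : ℕ, 1 ≤ j → j ≤ m - 1 →
      (N (j + 1) : ℝ) / (N j : ℝ) = (((m : ℝ) - j) / ((j : ℝ) + 1)) * (2 : ℝ) ^ (-(s : ℤ)) ∧
      (N (j + 1) : ℝ) / (N j : ℝ) ≤ (m : ℝ) * (2 : ℝ) ^ (-(s : ℤ)) := by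
  intro j hj1 hjm
  have hlt : ∀ i, (T i).card < (B i).card := fun i => by
    rw [hTcard i, hBcard i]; omega
  have hjm' : j + 1 ≤ m := by omega
  have hNj : N j = Nat.choose m j * 2 ^ (s * (m - j)) := by
    rw [hN j]; exact blockFamily_count B T hBdisj hT hTcard hs hlt j hj1
  have hNj1 : N (j + 1) = Nat.choose m (j + 1) * 2 ^ (s * (m - (j + 1))) := by
    rw [hN (j + 1)]; exact blockFamily_count B T hBdisj hT hTcard hs hlt (j + 1) (by omega)
  have hmjj : m - j = (m - (j + 1)) + 1 := by omega
  have hchoose : Nat.choose m (j + 1) * (j + 1) = Nat.choose m j * (m - j) :=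
    Nat.choose_succ_right_eq m j
  have hchoosepos : 0 < Nat.choose m j := Nat.choose_pos (by omega)
  -- real versions
  have hmj : ((m - j : ℕ) : ℝ) = (m : ℝ) - (j : ℝ) := by
    push_cast [Nat.cast_sub (by omega : j ≤ m)]; ring
  have hchooseR : (Nat.choose m (j + 1) : ℝ) * ((j : ℝ) + 1)
      = (Nat.choose m j : ℝ) * ((m : ℝ) - (j : ℝ)) := by
    rw [← hmj]
    exact_mod_cast congrArg (fun x : ℕ => (x : ℝ)) hchoose
  have hzpow : (2 : ℝ) ^ (-(s : ℤ)) = 1 / (2 : ℝ) ^ s := by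
    rw [zpow_neg, zpow_natCast]
    exact (one_div _).symm
  have h2s : (0 : ℝ) < (2 : ℝ) ^ s := by positivity
  have ha : (0 : ℝ) < (2 : ℝ) ^ (s * (m - (j + 1))) := by positivity
  have hc0 : (0 : ℝ) < (Nat.choose m j : ℝ) := by exact_mod_cast hchoosepos
  have hpow : (2 : ℝ) ^ (s * (m - j)) = (2 : ℝ) ^ (s * (m - (j + 1))) * (2 : ℝ) ^ s := by
    rw [← pow_add]
    congr 1
    rw [hmjj]; ring
  have heq : (N (j + 1) : ℝ) / (N j : ℝ)
      = (((m : ℝ) - j) / ((j : ℝ) + 1)) * (2 : ℝ) ^ (-(s : ℤ)) := by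
    rw [hNj, hNj1, hzpow]
    push_cast
    rw [hpow]
    have hj1pos : (0 : ℝ) < (j : ℝ) + 1 := by positivity
    field_simp
    nlinarith [hchooseR, ha.le, mul_pos ha h2s]
  refine ⟨heq, ?_⟩
  rw [heq, hzpow]
  have hj1pos : (0 : ℝ) < (j : ℝ) + 1 := by positivity
  have hmn : ((m : ℝ) - j) / ((j : ℝ) + 1) ≤ (m : ℝ) := by
    rw [div_le_iff₀ hj1pos]
    have hjn : (0 : ℝ) ≤ (j : ℝ) := Nat.cast_nonneg j
    have hmn' : (0 : ℝ) ≤ (m : ℝ) := Nat.cast_nonneg m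
    nlinarith
  have : (0 : ℝ) ≤ 1 / (2 : ℝ) ^ s := by positivity
  exact mul_le_mul_of_nonneg_right hmn this
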